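/- Let Φ be an irreducible root system of rank at least 2 not of type G₂ (possibly non-reduced), and let A ∈ Φ be a positive root. Then there exists a root B ∈ Φ, not proportional to A, with B or −B simple, such that A + B ∈ Φ and A − B ∉ Φ. -/

import Mathlib

open Finset RealInnerProductSpace

section RootSystemAux

variable {E : Type*} [NormedAddCommGroup E] [InnerProductSpace ℝ E]

lemma rs_self_pos {x : E} (hx : x ≠ 0) : (0:ℝ) < ⟪x, x⟫ :=
  lt_of_le_of_ne real_inner_self_nonneg
    (Ne.symm fun h => hx (inner_self_eq_zero.mp h))

lemma rs_cs {x y : E} (hx : x ≠ 0) (h : ∀ t : ℝ, y ≠ t • x) :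
    ⟪x, y⟫ * ⟪x, y⟫ < ⟪x, x⟫ * ⟪y, y⟫ := by
  have hx2 : (0:ℝ) < ⟪x, x⟫ := rs_self_pos hx
  set c : ℝ := ⟪x, y⟫ / ⟪x, x⟫ with hc
  have hz : y - c • x ≠ 0 := by
    intro h'
    exact h c (by rw [← sub_eq_zero]; exact h')
  have h3 : (0:ℝ) < ⟪y - c • x, y - c • x⟫ := rs_self_pos hz
  have hexp : ⟪y - c • x, y - c • x⟫ =
      ⟪y, y⟫ - 2 * c * ⟪x, y⟫ + c * c * ⟪x, x⟫ := by
    simp only [inner_sub_left, inner_sub_right, real_inner_smul_left, real_inner_smul_right,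
      real_inner_comm x y]
    ring
  rw [hexp, hc] at h3
  have h4 := mul_pos hx2 h3
  have hne : ⟪x, x⟫ ≠ 0 := ne_of_gt hx2
  field_simp at h4
  nlinarith [h4, hx2]

lemma rs_neg_mem (Φ : Set E) (h0 : (0 : E) ∉ Φ)
    (hrefl : ∀ α ∈ Φ, ∀ β ∈ Φ, β - (2 * ⟪β, α⟫ / ⟪α, α⟫) • α ∈ Φ)
    {γ : E} (hγ : γ ∈ Φ) : -γ ∈ Φ := by
  have hγ0 : γ ≠ 0 := fun h => h0 (h ▸ hγ)
  have h2 : (0:ℝ) < ⟪γ, γ⟫ := rs_self_pos hγ0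
  have hm := hrefl γ hγ γ hγ
  have hr : 2 * ⟪γ, γ⟫ / ⟪γ, γ⟫ = 2 := by field_simp
  rw [hr] at hm
  have he : γ - (2:ℝ) • γ = -γ := by module
  rwa [he] at hm

/-- If two roots are really proportional, they are rationally proportional. -/
lemma rs_rat (Φ : Set E) (h0 : (0 : E) ∉ Φ)
    (hint : ∀ α ∈ Φ, ∀ β ∈ Φ, ∃ n : ℤ, 2 * ⟪β, α⟫ = (n : ℝ) * ⟪α, α⟫)
    {A B : E} (hA : A ∈ Φ) (hB : B ∈ Φ)
    (hq : ¬ ∃ q : ℚ, B = (q : ℝ) • A) : ∀ t : ℝ, B ≠ t • A := by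
  intro t hBt
  obtain ⟨n, hn⟩ := hint A hA B hB
  have hA0 : A ≠ 0 := fun h => h0 (h ▸ hA)
  have hApos : (0:ℝ) < ⟪A, A⟫ := rs_self_pos hA0
  have h1 : ⟪B, A⟫ = t * ⟪A, A⟫ := by rw [hBt, real_inner_smul_left]
  have h2 : 2 * t = (n : ℝ) := by
    rw [h1] at hn
    exact mul_right_cancel₀ (ne_of_gt hApos)
      (by linarith [hn] : (2 * t) * ⟪A, A⟫ = (n:ℝ) * ⟪A, A⟫)
  apply hq
  refine ⟨(n : ℚ) / 2, ?_⟩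
  rw [hBt]
  congr 1
  push_cast
  linarith

lemma rs_sum (Φ : Set E) (h0 : (0 : E) ∉ Φ)
    (hrefl : ∀ α ∈ Φ, ∀ β ∈ Φ, β - (2 * ⟪β, α⟫ / ⟪α, α⟫) • α ∈ Φ)
    (hint : ∀ α ∈ Φ, ∀ β ∈ Φ, ∃ n : ℤ, 2 * ⟪β, α⟫ = (n : ℝ) * ⟪α, α⟫)
    {α β : E} (hα : α ∈ Φ) (hβ : β ∈ Φ) (hneg : ⟪α, β⟫ < 0) (hne : α + β ≠ 0) :
    α + β ∈ Φ := by
  have hα0 : α ≠ 0 := fun h => h0 (h ▸ hα)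
  have hβ0 : β ≠ 0 := fun h => h0 (h ▸ hβ)
  have hαpos : (0:ℝ) < ⟪α, α⟫ := rs_self_pos hα0
  have hβpos : (0:ℝ) < ⟪β, β⟫ := rs_self_pos hβ0
  obtain ⟨n, hn⟩ := hint α hα β hβ
  obtain ⟨m, hm⟩ := hint β hβ α hα
  have hβα : ⟪β, α⟫ = ⟪α, β⟫ := real_inner_comm _ _
  have hnneg : (n : ℝ) < 0 := by
    by_contra h
    push_neg at h
    nlinarith [hn, hβα]
  have hmneg : (m : ℝ) < 0 := by
    by_contra h
    push_neg at h
    nlinarith [hm]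
  have hn1 : n ≤ -1 := by
    have : n < 0 := by exact_mod_cast hnneg
    omega
  have hm1 : m ≤ -1 := by
    have : m < 0 := by exact_mod_cast hmneg
    omega
  by_cases hdep : ∃ t : ℝ, β = t • α
  · obtain ⟨t, ht⟩ := hdep
    have h1 : ⟪α, β⟫ = t * ⟪α, α⟫ := by rw [ht, real_inner_smul_right]
    have htneg : t < 0 := by nlinarith
    have h2t : 2 * t = (n : ℝ) := by
      have h2 : ⟪β, α⟫ = t * ⟪α, α⟫ := by rw [hβα, h1]
      rw [h2] at hn
      exact mul_right_cancel₀ (ne_of_gt hαpos) (by linarith)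
    have hββ : ⟪β, β⟫ = t * t * ⟪α, α⟫ := by
      rw [ht, real_inner_smul_left, real_inner_smul_right]; ring
    have h2mt : 2 = (m : ℝ) * t := by
      rw [h1, hββ] at hm
      have := mul_right_cancel₀ (ne_of_gt hαpos)
        (by linarith : (2 * t) * ⟪α, α⟫ = ((m:ℝ) * t * t) * ⟪α, α⟫)
      have ht0 : t ≠ 0 := ne_of_lt htneg
      field_simp at this ⊢
      nlinarith [this]
    have hnm4 : n * m = 4 := by
      have : ((n * m : ℤ) : ℝ) = 4 := by push_cast; nlinarith [h2t, h2mt]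
      exact_mod_cast this
    have htne1 : t ≠ -1 := by
      intro h
      apply hne
      rw [ht, h]
      module
    have hn2 : n ≠ -2 := by
      intro h
      rw [h] at h2t
      apply htne1
      push_cast at h2t
      linarith
    have hcase : n = -1 ∨ n = -4 := by
      have h4 : -4 ≤ n := by nlinarith [hn1, hm1, hnm4]
      interval_cases n <;> omega
    rcases hcase with h | h
    · have ht' : t = -(1/2) := by rw [h] at h2t; push_cast at h2t; linarith
      have he : α + β = -β := by rw [ht, ht']; module
      rw [he]
      exact rs_neg_mem Φ h0 hrefl hβ
    · have ht' : t = -2 := by rw [h] at h2t; push_cast at h2t; linarith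
      have he : α + β = -α := by rw [ht, ht']; module
      rw [he]
      exact rs_neg_mem Φ h0 hrefl hα
  · push_neg at hdep
    have hcs := rs_cs hα0 hdep
    have hnm : n * m ≤ 3 := by
      have h4 : ((n:ℝ)) * m < 4 := by
        have e1 : (n:ℝ) * ⟪α,α⟫ * ((m:ℝ) * ⟪β,β⟫) = 4 * (⟪α,β⟫ * ⟪α,β⟫) := by
          rw [← hn, ← hm, hβα]; ring
        nlinarith [hcs, hαpos, hβpos, e1]
      have : n * m < 4 := by exact_mod_cast (by push_cast; exact h4 : ((n*m : ℤ):ℝ) < 4)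
      omega
    have hcase : n = -1 ∨ m = -1 := by
      by_contra h
      push_neg at h
      have : n ≤ -2 := by omega
      have : m ≤ -2 := by omega
      nlinarith
    rcases hcase with h | h
    · have hm2 := hrefl α hα β hβ
      have hr : 2 * ⟪β, α⟫ / ⟪α, α⟫ = (n : ℝ) := by
        rw [hn]; field_simp
      rw [hr, h] at hm2
      have he : β - ((-1 : ℤ) : ℝ) • α = α + β := by push_cast; module
      rwa [he] at hm2
    · have hm2 := hrefl β hβ α hα
      have hr : 2 * ⟪α, β⟫ / ⟪β, β⟫ = (m : ℝ) := by
        rw [hm]; field_simp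
      rw [hr, h] at hm2
      have he : α - ((-1 : ℤ) : ℝ) • β = α + β := by push_cast; module
      rwa [he] at hm2

lemma rs_diff (Φ : Set E) (h0 : (0 : E) ∉ Φ)
    (hint : ∀ α ∈ Φ, ∀ β ∈ Φ, ∃ n : ℤ, 2 * ⟪β, α⟫ = (n : ℝ) * ⟪α, α⟫)
    (hnotG2 : ¬ ∃ α ∈ Φ, ∃ β ∈ Φ, ⟪α, α⟫ = 3 * ⟪β, β⟫)
    {A B : E} (hA : A ∈ Φ) (hB : B ∈ Φ) (hneg : ⟪A, B⟫ < 0)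
    (hindep : ∀ t : ℝ, B ≠ t • A) : A - B ∉ Φ := by
  intro hγ
  set γ := A - B with hγdef
  have hA0 : A ≠ 0 := fun h => h0 (h ▸ hA)
  have hB0 : B ≠ 0 := fun h => h0 (h ▸ hB)
  have hBpos : (0:ℝ) < ⟪B, B⟫ := rs_self_pos hB0
  have hγ0 : γ ≠ 0 := by
    intro h
    have : B = (1:ℝ) • A := by
      have := sub_eq_zero.mp h
      simp [this]
    exact hindep 1 this
  have hγpos : (0:ℝ) < ⟪γ, γ⟫ := rs_self_pos hγ0
  have hγindep : ∀ t : ℝ, γ ≠ t • B := by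
    intro t ht
    have hA' : A = (1 + t) • B := by
      have h1 : A - B = t • B := ht
      have h2 := sub_eq_iff_eq_add.mp h1
      rw [h2]; module
    have ht1 : 1 + t ≠ 0 := by
      intro h
      apply hA0
      rw [hA', h, zero_smul]
    apply hindep (1 + t)⁻¹
    rw [hA', smul_smul, inv_mul_cancel₀ ht1, one_smul]
  obtain ⟨k, hk⟩ := hint B hB A hA
  have hkneg : k ≤ -1 := by
    have h1 : (k:ℝ) < 0 := by nlinarith [hk]
    have : k < 0 := by exact_mod_cast h1
    omega
  have hγB : 2 * ⟪γ, B⟫ = ((k - 2 : ℤ) : ℝ) * ⟪B, B⟫ := by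
    have h1 : ⟪γ, B⟫ = ⟪A, B⟫ - ⟪B, B⟫ := by
      rw [hγdef, inner_sub_left]
    rw [h1]
    push_cast
    linarith [hk]
  have hkr : ((k - 2 : ℤ) : ℝ) ≤ -3 := by exact_mod_cast (by omega : (k:ℤ) - 2 ≤ -3)
  obtain ⟨m, hm⟩ := hint γ hγ B hB
  have hBγ : ⟪B, γ⟫ = ⟪γ, B⟫ := real_inner_comm _ _
  have hmneg : m ≤ -1 := by
    have h1 : ⟪γ, B⟫ < 0 := by nlinarith [hγB, hBpos, hkr]
    have h2 : (m:ℝ) < 0 := by nlinarith [hm, hγpos, hBγ]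
    have : m < 0 := by exact_mod_cast h2
    omega
  have hcs := rs_cs hB0 hγindep
  have hprod : (k - 2) * m ≤ 3 := by
    have e1 : ((k-2:ℤ):ℝ) * ⟪B,B⟫ * ((m:ℝ) * ⟪γ,γ⟫) = 4 * (⟪B,γ⟫ * ⟪B,γ⟫) := by
      rw [← hγB, ← hm, hBγ]; ring
    have h4 : (((k-2) * m : ℤ) : ℝ) < 4 := by
      push_cast at e1 hkr ⊢
      nlinarith [hcs, hBpos, hγpos, e1, mul_pos hBpos hγpos, sq_nonneg (⟪B,γ⟫)]
    have : (k-2) * m < 4 := by exact_mod_cast h4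
    omega
  have hk3 : k - 2 ≤ -3 := by omega
  have heq : (k - 2 = -3 ∧ m = -1) := by
    constructor <;> nlinarith [hprod, hk3, hmneg]
  apply hnotG2
  refine ⟨γ, hγ, B, hB, ?_⟩
  have e2 : 2 * ⟪γ, B⟫ = -3 * ⟪B, B⟫ := by rw [hγB, heq.1]; push_cast; ring
  have e3 : 2 * ⟪B, γ⟫ = -⟪γ, γ⟫ := by rw [hm, heq.2]; push_cast; ring
  rw [hBγ] at e3
  linarith [e2, e3]

lemma rs_unique (Δ : Finset E)
    (hΔindep : LinearIndependent ℝ (Subtype.val : {x : E // x ∈ Δ} → E))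
    (f g : E → ℝ) (h : ∑ b ∈ Δ, f b • b = ∑ b ∈ Δ, g b • b) :
    ∀ b ∈ Δ, f b = g b := by
  have h0 : ∑ b ∈ Δ, (f b - g b) • b = 0 := by
    simp only [sub_smul]
    rw [Finset.sum_sub_distrib, h, sub_self]
  rw [← Finset.sum_attach Δ (fun b => (f b - g b) • b)] at h0
  have key := linearIndependent_iff'.mp hΔindep Δ.attach
    (fun i => f i.val - g i.val) h0
  intro b hb
  have h2 := key ⟨b, hb⟩ (Finset.mem_attach _ _)
  simp only [] at h2
  linarith [h2]

end RootSystemAux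

/-- Let `Φ` be an irreducible (possibly non-reduced) root system of rank at least `2`,
not of type `G₂` (i.e. without roots whose squared lengths have ratio `3`), with a base `Δ`
of simple roots, and let `A ∈ Φ` be a positive root. Then there exists a root `B ∈ Φ`,
not proportional to `A`, with `B` or `-B` simple, such that `A + B ∈ Φ` and `A - B ∉ Φ`. -/
theorem stmt_4 {E : Type*} [NormedAddCommGroup E] [InnerProductSpace ℝ E]
    [FiniteDimensional ℝ E]
    (Φ : Set E) (hfin : Φ.Finite) (h0 : (0 : E) ∉ Φ)
    (hspan : Submodule.span ℝ Φ = ⊤)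
    (hrefl : ∀ α ∈ Φ, ∀ β ∈ Φ, β - (2 * ⟪β, α⟫ / ⟪α, α⟫) • α ∈ Φ)
    (hint : ∀ α ∈ Φ, ∀ β ∈ Φ, ∃ n : ℤ, 2 * ⟪β, α⟫ = (n : ℝ) * ⟪α, α⟫)
    (hirred : ∀ Φ₁ Φ₂ : Set E, Φ = Φ₁ ∪ Φ₂ →
      (∀ α ∈ Φ₁, ∀ β ∈ Φ₂, ⟪α, β⟫ = 0) → Φ₁ = ∅ ∨ Φ₂ = ∅)
    (hnotG2 : ¬ ∃ α ∈ Φ, ∃ β ∈ Φ, ⟪α, α⟫ = 3 * ⟪β, β⟫)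
    (Δ : Finset E) (hΔΦ : ↑Δ ⊆ Φ)
    (hΔindep : LinearIndependent ℝ (Subtype.val : {x : E // x ∈ Δ} → E))
    (hbase : ∀ α ∈ Φ, ∃ c : E → ℤ, α = ∑ b ∈ Δ, (c b : ℝ) • b ∧
      ((∀ b ∈ Δ, 0 ≤ c b) ∨ (∀ b ∈ Δ, c b ≤ 0)))
    (hrank : 2 ≤ Δ.card)
    (A : E) (hA : A ∈ Φ)
    (hApos : ∃ c : E → ℤ, A = ∑ b ∈ Δ, (c b : ℝ) • b ∧ ∀ b ∈ Δ, 0 ≤ c b) :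
    ∃ B ∈ Φ, (¬ ∃ q : ℚ, B = (q : ℝ) • A) ∧ (B ∈ Δ ∨ -B ∈ Δ) ∧
      A + B ∈ Φ ∧ A - B ∉ Φ := by
  classical
  have hA0 : A ≠ 0 := fun h => h0 (h ▸ hA)
  by_cases hex : ∃ α ∈ Δ, (¬ ∃ q : ℚ, α = (q : ℝ) • A) ∧ ⟪A, α⟫ ≠ 0
  · obtain ⟨α, hαΔ, hαprop, hαinner⟩ := hex
    have hαΦ : α ∈ Φ := hΔΦ hαΔ
    have hαindep : ∀ t : ℝ, α ≠ t • A := rs_rat Φ h0 hint hA hαΦ hαprop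
    rcases lt_or_gt_of_ne hαinner with hlt | hgt
    · refine ⟨α, hαΦ, hαprop, Or.inl hαΔ, ?_, ?_⟩
      · refine rs_sum Φ h0 hrefl hint hA hαΦ hlt ?_
        intro h
        exact hαindep (-1) (by rw [neg_one_smul]; exact eq_neg_of_add_eq_zero_right h)
      · exact rs_diff Φ h0 hint hnotG2 hA hαΦ hlt hαindep
    · have hnegα : -α ∈ Φ := rs_neg_mem Φ h0 hrefl hαΦ
      have hprop' : ¬ ∃ q : ℚ, -α = (q : ℝ) • A := by
        rintro ⟨q, hq⟩
        refine hαprop ⟨-q, ?_⟩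
        push_cast
        rw [neg_smul, ← hq, neg_neg]
      have hindep' : ∀ t : ℝ, -α ≠ t • A := rs_rat Φ h0 hint hA hnegα hprop'
      have hlt' : ⟪A, -α⟫ < 0 := by rw [inner_neg_right]; linarith
      refine ⟨-α, hnegα, hprop', Or.inr (by rwa [neg_neg]), ?_, ?_⟩
      · refine rs_sum Φ h0 hrefl hint hA hnegα hlt' ?_
        intro h
        exact hindep' (-1) (by rw [neg_one_smul]; exact eq_neg_of_add_eq_zero_right h)
      · exact rs_diff Φ h0 hint hnotG2 hA hnegα hlt' hindep'
  · exfalso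
    push_neg at hex
    by_cases hpropcase : ∃ α₀ ∈ Δ, ∃ q : ℚ, α₀ = (q : ℝ) • A
    · obtain ⟨α₀, hα₀Δ, q, hα₀q⟩ := hpropcase
      have hα₀Φ : α₀ ∈ Φ := hΔΦ hα₀Δ
      have hα₀0 : α₀ ≠ 0 := fun h => h0 (h ▸ hα₀Φ)
      have hα₀pos : (0:ℝ) < ⟪α₀, α₀⟫ := rs_self_pos hα₀0
      have hq0 : (q : ℝ) ≠ 0 := by
        intro h
        apply hα₀0
        rw [hα₀q, h, zero_smul]
      have hA' : A = (q : ℝ)⁻¹ • α₀ := by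
        rw [hα₀q, smul_smul, inv_mul_cancel₀ hq0, one_smul]
      -- distinct simple roots are not proportional
      have hnotprop : ∀ b ∈ Δ, b ≠ α₀ → ∀ r : ℝ, b ≠ r • α₀ := by
        intro b hb hbne r hbr
        have h1 : ∑ x ∈ Δ, (fun x => if x = b then (1:ℝ) else 0) x • x = b := by
          rw [Finset.sum_eq_single b]
          · simp
          · intro c hc hcb
            simp [hcb]
          · intro h; exact absurd hb h
        have h2 : ∑ x ∈ Δ, (fun x => if x = α₀ then r else 0) x • x = r • α₀ := by
          rw [Finset.sum_eq_single α₀]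
          · simp
          · intro c hc hcb
            simp [hcb]
          · intro h; exact absurd hα₀Δ h
        have := rs_unique Δ hΔindep _ _ (h1.trans (hbr.trans h2.symm)) b hb
        simp [hbne] at this
      -- α₀ is orthogonal to all other simple roots
      have horthΔ : ∀ b ∈ Δ, b ≠ α₀ → ⟪α₀, b⟫ = 0 := by
        intro b hb hbne
        have hbprop : ¬ ∃ q' : ℚ, b = (q' : ℝ) • A := by
          rintro ⟨q', hq'⟩
          refine hnotprop b hb hbne ((q' : ℝ) * (q : ℝ)⁻¹) ?_
          rw [hq', hA', smul_smul]
        have hAb := hex b hb (fun q' hq' => hbprop ⟨q', hq'⟩)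
        rw [hα₀q, real_inner_smul_left, hAb, mul_zero]
      -- roots non-orthogonal to α₀ are multiples of α₀
      have hclaim : ∀ β ∈ Φ, ⟪β, α₀⟫ ≠ 0 → ∃ t : ℝ, β = t • α₀ := by
        intro β hβ hβα₀
        obtain ⟨c, hcβ, hcsign⟩ := hbase β hβ
        have hinner : ⟪β, α₀⟫ = (c α₀ : ℝ) * ⟪α₀, α₀⟫ := by
          rw [hcβ, sum_inner]
          rw [Finset.sum_eq_single α₀]
          · rw [real_inner_smul_left]
          · intro b hb hbne
            have hb0 : ⟪b, α₀⟫ = 0 := by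
              rw [real_inner_comm]
              exact horthΔ b hb hbne
            rw [real_inner_smul_left, hb0, mul_zero]
          · intro h; exact absurd hα₀Δ h
        have hcα₀ : c α₀ ≠ 0 := by
          intro h
          rw [h] at hinner
          simp at hinner
          exact hβα₀ hinner
        by_cases hall : ∀ b ∈ Δ, b ≠ α₀ → c b = 0
        · refine ⟨(c α₀ : ℝ), ?_⟩
          rw [hcβ, Finset.sum_eq_single α₀]
          · intro b hb hbne
            rw [hall b hb hbne]
            simp
          · intro h; exact absurd hα₀Δ h
        · push_neg at hall
          obtain ⟨b₁, hb₁Δ, hb₁ne, hcb₁⟩ := hall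
          have hβ'mem := hrefl α₀ hα₀Φ β hβ
          have hr : 2 * ⟪β, α₀⟫ / ⟪α₀, α₀⟫ = 2 * (c α₀ : ℝ) := by
            have hne0 : ⟪α₀, α₀⟫ ≠ 0 := ne_of_gt hα₀pos
            rw [hinner]
            field_simp
          rw [hr] at hβ'mem
          have hβ'sum : β - (2 * (c α₀ : ℝ)) • α₀
              = ∑ b ∈ Δ, (if b = α₀ then -(c α₀ : ℝ) else (c b : ℝ)) • b := by
            have e : ∀ b ∈ Δ, (if b = α₀ then -(c α₀ : ℝ) else (c b : ℝ)) • b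
                = (c b : ℝ) • b - (if b = α₀ then (2 * (c α₀ : ℝ)) • α₀ else 0) := by
              intro b hb
              by_cases h : b = α₀
              · rw [if_pos h, if_pos h, h]
                module
              · rw [if_neg h, if_neg h, sub_zero]
            rw [Finset.sum_congr rfl e, Finset.sum_sub_distrib,
              Finset.sum_ite_eq' Δ α₀ (fun _ => (2 * (c α₀ : ℝ)) • α₀), if_pos hα₀Δ, ← hcβ]
          obtain ⟨d, hdβ', hdsign⟩ := hbase _ hβ'mem
          exfalso
          have huniq := rs_unique Δ hΔindep
            (fun x => if x = α₀ then -(c α₀ : ℝ) else (c x : ℝ)) (fun b => (d b : ℝ))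
            (hβ'sum.symm.trans hdβ')
          have hdα₀ : d α₀ = -(c α₀) := by
            have h1 := huniq α₀ hα₀Δ
            simp only [if_pos rfl] at h1
            exact_mod_cast h1.symm
          have hdb₁ : d b₁ = c b₁ := by
            have h1 := huniq b₁ hb₁Δ
            simp only [if_neg hb₁ne] at h1
            exact_mod_cast h1.symm
          rcases hcsign with hc1 | hc1 <;> rcases hdsign with hd1 | hd1 <;>
            [skip; skip; skip; skip] <;>
          · have i1 := hc1 α₀ hα₀Δ
            have i2 := hc1 b₁ hb₁Δ
            have i3 := hd1 α₀ hα₀Δ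
            have i4 := hd1 b₁ hb₁Δ
            omega
      -- irreducibility contradiction
      obtain ⟨b₁, hb₁Δ, hb₁ne⟩ := Finset.exists_mem_ne (show 1 < Δ.card by omega) α₀
      have hsplit : Φ = {β ∈ Φ | ⟪β, α₀⟫ ≠ 0} ∪ {β ∈ Φ | ⟪β, α₀⟫ = 0} := by
        ext x
        simp only [Set.mem_union, Set.mem_setOf_eq]
        tauto
      have horth2 : ∀ x ∈ {β ∈ Φ | ⟪β, α₀⟫ ≠ 0}, ∀ y ∈ {β ∈ Φ | ⟪β, α₀⟫ = 0},
          ⟪x, y⟫ = 0 := by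
        rintro x ⟨hxΦ, hx⟩ y ⟨hyΦ, hy⟩
        obtain ⟨t, ht⟩ := hclaim x hxΦ hx
        rw [ht, real_inner_smul_left]
        have h1 : ⟪α₀, y⟫ = 0 := by rw [real_inner_comm]; exact hy
        rw [h1, mul_zero]
      rcases hirred _ _ hsplit horth2 with h | h
      · have hmem : α₀ ∈ {β ∈ Φ | ⟪β, α₀⟫ ≠ 0} := Set.mem_sep hα₀Φ (ne_of_gt hα₀pos)
        rw [h] at hmem
        exact hmem
      · have hb₁0 : ⟪b₁, α₀⟫ = 0 := by
          rw [real_inner_comm]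
          exact horthΔ b₁ hb₁Δ hb₁ne
        have hmem : b₁ ∈ {β ∈ Φ | ⟪β, α₀⟫ = 0} := Set.mem_sep (hΔΦ hb₁Δ) hb₁0
        rw [h] at hmem
        exact hmem
    · push_neg at hpropcase
      obtain ⟨c, hcA, hcpos⟩ := hApos
      have hAA : ⟪A, A⟫ = 0 := by
        have e1 : ⟪A, A⟫ = ⟪A, ∑ b ∈ Δ, (c b : ℝ) • b⟫ := by rw [← hcA]
        rw [e1, inner_sum]
        apply Finset.sum_eq_zero
        intro b hb
        have hb0 : ⟪A, b⟫ = 0 :=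
          hex b hb (fun q' hq' => hpropcase b hb q' hq')
        rw [real_inner_smul_right, hb0, mul_zero]
      exact hA0 (inner_self_eq_zero.mp hAA)
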